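/- Let 0 < ζ < 1 and define G_r(z,y) = (1/2)·e^{-|z-y|} - (1/2)·e^{2ζ-z-y} for z, y ∈ [ζ,1]. For every continuous f : [ζ,1] → ℝ, the function u₂(z) = ∫_ζ¹ G_r(z,y) f(y) dy is twice continuously differentiable on [ζ,1], satisfies u₂(z) - u₂''(z) = f(z) for all z ∈ [ζ,1], and satisfies the boundary conditions u₂(ζ) = 0 and u₂(1) = -u₂'(1). -/

import Mathlib

/-- The right-child kernel `G_r(z,y) = (1/2)e^{-|z-y|} - (1/2)e^{2ζ-z-y}` is the Green's
function of `u - u'' = f` on `[ζ,1]` with boundary conditions `u(ζ) = 0`, `u(1) = -u'(1)`: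
for continuous `f`, the function `u₂(z) = ∫_ζ¹ G_r(z,y) f(y) dy` is twice continuously
differentiable on `[ζ,1]`, satisfies the ODE there, and satisfies the boundary conditions. -/
theorem right_child_kernel_is_green_function
    (ζ : ℝ) (hζ0 : 0 < ζ) (hζ1 : ζ < 1)
    (f : ℝ → ℝ) (hf : ContinuousOn f (Set.Icc ζ 1))
    (u₂ : ℝ → ℝ)
    (hu₂ : ∀ z, u₂ z = ∫ y in ζ..1,
        ((1/2) * Real.exp (-|z - y|) - (1/2) * Real.exp (2*ζ - z - y)) * f y) :
    ContDiffOn ℝ 2 u₂ (Set.Icc ζ 1) ∧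
    (∀ z ∈ Set.Icc ζ (1:ℝ),
      u₂ z - derivWithin (derivWithin u₂ (Set.Icc ζ 1)) (Set.Icc ζ 1) z = f z) ∧
    u₂ ζ = 0 ∧
    u₂ 1 = - derivWithin u₂ (Set.Icc ζ 1) 1 := by
  have hζle : ζ ≤ 1 := hζ1.le
  -- Tietze extension of f
  obtain ⟨gc, hgc⟩ := ContinuousMap.exists_restrict_eq (Y := ℝ)
    (isClosed_Icc : IsClosed (Set.Icc ζ 1)) ⟨_, hf.restrict⟩
  set g : ℝ → ℝ := ⇑gc with hg_def
  have hg : Continuous g := gc.continuous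
  have hgf : ∀ x ∈ Set.Icc ζ 1, g x = f x := by
    intro x hx
    exact congrFun (congrArg ContinuousMap.toFun hgc) ⟨x, hx⟩
  have hc1 : Continuous fun y : ℝ => Real.exp y * g y := Real.continuous_exp.mul hg
  have hc2 : Continuous fun y : ℝ => Real.exp (-y) * g y :=
    (Real.continuous_exp.comp continuous_neg).mul hg
  set A : ℝ → ℝ := fun z => ∫ y in ζ..z, Real.exp y * g y with hA_def
  set D : ℝ → ℝ := fun z => ∫ y in ζ..z, Real.exp (-y) * g y with hD_def
  set C : ℝ := ∫ y in ζ..(1:ℝ), Real.exp (-y) * g y with hC_def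
  have hA : ∀ z, HasDerivAt A (Real.exp z * g z) z := fun z =>
    intervalIntegral.integral_hasDerivAt_right (hc1.intervalIntegrable _ _)
      (hc1.stronglyMeasurableAtFilter _ _) hc1.continuousAt
  have hD : ∀ z, HasDerivAt D (Real.exp (-z) * g z) z := fun z =>
    intervalIntegral.integral_hasDerivAt_right (hc2.intervalIntegrable _ _)
      (hc2.stronglyMeasurableAtFilter _ _) hc2.continuousAt
  set v : ℝ → ℝ := fun z =>
    (1/2) * Real.exp (-z) * (A z - Real.exp (2*ζ) * C)
      + (1/2) * Real.exp z * (C - D z) with hv_def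
  set w : ℝ → ℝ := fun z =>
    -((1/2) * Real.exp (-z) * (A z - Real.exp (2*ζ) * C))
      + (1/2) * Real.exp z * (C - D z) with hw_def
  have hexp : ∀ z : ℝ, HasDerivAt (fun z : ℝ => Real.exp (-z)) (-Real.exp (-z)) z := by
    intro z
    simpa [Function.comp_def] using (Real.hasDerivAt_exp (-z)).comp z (hasDerivAt_neg z)
  have hv : ∀ z, HasDerivAt v (w z) z := by
    intro z
    have h1 := (((hexp z).const_mul ((1:ℝ)/2)).mul ((hA z).sub_const (Real.exp (2*ζ) * C)))
    have h2 := (((Real.hasDerivAt_exp z).const_mul ((1:ℝ)/2)).mul ((hD z).const_sub C))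
    have h3 := h1.add h2
    refine h3.congr_deriv ?_
    simp only [hw_def]
    rw [Real.exp_neg]
    field_simp
    ring
  have hw : ∀ z, HasDerivAt w (v z - g z) z := by
    intro z
    have h1 := (((hexp z).const_mul ((1:ℝ)/2)).mul ((hA z).sub_const (Real.exp (2*ζ) * C))).neg
    have h2 := (((Real.hasDerivAt_exp z).const_mul ((1:ℝ)/2)).mul ((hD z).const_sub C))
    have h3 := h1.add h2
    refine h3.congr_deriv ?_
    simp only [hv_def]
    rw [Real.exp_neg]
    field_simp
    ring
  have hvd : Differentiable ℝ v := fun z => (hv z).differentiableAt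
  have hwd : Differentiable ℝ w := fun z => (hw z).differentiableAt
  have hdv : deriv v = w := funext fun z => (hv z).deriv
  have hdw : deriv w = fun z => v z - g z := funext fun z => (hw z).deriv
  have hv2 : ContDiff ℝ 2 v := by
    have h0 : ContDiff ℝ (0 + 1) w := by
      rw [contDiff_succ_iff_deriv]
      refine ⟨hwd, by simp, ?_⟩
      rw [hdw, contDiff_zero]
      exact hvd.continuous.sub hg
    have h1 : ContDiff ℝ (1 + 1) v := by
      rw [contDiff_succ_iff_deriv]
      refine ⟨hvd, by simp, ?_⟩
      rw [hdv]
      simpa using h0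
    exact h1
  -- u₂ agrees with v on [ζ, 1]
  have huv : ∀ z ∈ Set.Icc ζ 1, u₂ z = v z := by
    intro z hz
    obtain ⟨hz1, hz2⟩ := hz
    have hcP : Continuous fun y : ℝ => (1/2) * Real.exp (-|z - y|) * g y := by
      have hcont : Continuous fun y : ℝ => -|z - y| :=
        ((continuous_const.sub continuous_id).abs).neg
      exact (continuous_const.mul (Real.continuous_exp.comp hcont)).mul hg
    have hcQ : Continuous fun y : ℝ => (1/2) * Real.exp (2*ζ - z - y) * g y := by
      have hcont : Continuous fun y : ℝ => 2*ζ - z - y :=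
        (continuous_const.sub continuous_id)
      exact (continuous_const.mul (Real.continuous_exp.comp hcont)).mul hg
    rw [hu₂ z]
    have hfg : (∫ y in ζ..1, ((1/2) * Real.exp (-|z - y|) - (1/2) * Real.exp (2*ζ - z - y)) * f y)
        = ∫ y in ζ..1, ((1/2) * Real.exp (-|z - y|) * g y - (1/2) * Real.exp (2*ζ - z - y) * g y) := by
      apply intervalIntegral.integral_congr
      intro y hy
      rw [Set.uIcc_of_le hζle] at hy
      dsimp only
      rw [hgf y hy]
      ring
    rw [hfg, intervalIntegral.integral_sub (hcP.intervalIntegrable _ _) (hcQ.intervalIntegrable _ _)]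
    have hQ : (∫ y in ζ..1, (1/2) * Real.exp (2*ζ - z - y) * g y)
        = (1/2) * Real.exp (2*ζ) * Real.exp (-z) * C := by
      have heq : ∀ y : ℝ, (1/2) * Real.exp (2*ζ - z - y) * g y
          = ((1/2) * Real.exp (2*ζ) * Real.exp (-z)) * (Real.exp (-y) * g y) := by
        intro y
        rw [show (2*ζ - z - y) = 2*ζ + (-z) + (-y) by ring, Real.exp_add, Real.exp_add]
        ring
      simp_rw [heq]
      rw [intervalIntegral.integral_const_mul, hC_def]
    have hsplit : (∫ y in ζ..1, (1/2) * Real.exp (-|z - y|) * g y)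
        = (∫ y in ζ..z, (1/2) * Real.exp (-|z - y|) * g y)
          + ∫ y in z..1, (1/2) * Real.exp (-|z - y|) * g y :=
      (intervalIntegral.integral_add_adjacent_intervals (hcP.intervalIntegrable _ _)
        (hcP.intervalIntegrable _ _)).symm
    have hP1 : (∫ y in ζ..z, (1/2) * Real.exp (-|z - y|) * g y)
        = (1/2) * Real.exp (-z) * A z := by
      rw [show (1/2) * Real.exp (-z) * A z = ((1/2) * Real.exp (-z)) * A z by ring,
        hA_def, ← intervalIntegral.integral_const_mul]
      apply intervalIntegral.integral_congr
      intro y hy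
      rw [Set.uIcc_of_le hz1] at hy
      have habs : |z - y| = z - y := abs_of_nonneg (by linarith [hy.2])
      dsimp only
      rw [habs, show -(z - y) = -z + y by ring, Real.exp_add]
      ring
    have hCD : D z + (∫ y in z..1, Real.exp (-y) * g y) = C :=
      intervalIntegral.integral_add_adjacent_intervals (hc2.intervalIntegrable _ _)
        (hc2.intervalIntegrable _ _)
    have hP2 : (∫ y in z..1, (1/2) * Real.exp (-|z - y|) * g y)
        = (1/2) * Real.exp z * (C - D z) := by
      have h5 : (∫ y in z..1, (1/2) * Real.exp (-|z - y|) * g y)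
          = ((1/2) * Real.exp z) * ∫ y in z..1, Real.exp (-y) * g y := by
        rw [← intervalIntegral.integral_const_mul]
        apply intervalIntegral.integral_congr
        intro y hy
        rw [Set.uIcc_of_le hz2] at hy
        have habs : |z - y| = y - z := by
          rw [abs_sub_comm]; exact abs_of_nonneg (by linarith [hy.1])
        dsimp only
        rw [habs, show -(y - z) = z + -y by ring, Real.exp_add]
        ring
      have h4 : (∫ y in z..1, Real.exp (-y) * g y) = C - D z := by linarith [hCD]
      rw [h5, h4]
    rw [hsplit, hP1, hP2, hQ]
    simp only [hv_def]
    ring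
  have hEq : Set.EqOn u₂ v (Set.Icc ζ 1) := fun z hz => huv z hz
  have hUD := uniqueDiffOn_Icc hζ1
  have hd1 : ∀ x ∈ Set.Icc ζ 1, derivWithin u₂ (Set.Icc ζ 1) x = w x := by
    intro x hx
    rw [derivWithin_congr hEq (hEq hx)]
    exact ((hv x).hasDerivWithinAt).derivWithin (hUD x hx)
  refine ⟨(hv2.contDiffOn).congr hEq, ?_, ?_, ?_⟩
  · intro z hz
    have hd2 : derivWithin (derivWithin u₂ (Set.Icc ζ 1)) (Set.Icc ζ 1) z = v z - g z := by
      rw [derivWithin_congr (fun x hx => hd1 x hx) (hd1 z hz)]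
      exact ((hw z).hasDerivWithinAt).derivWithin (hUD z hz)
    rw [hd2, huv z hz, hgf z hz]
    ring
  · rw [huv ζ (Set.left_mem_Icc.mpr hζle)]
    simp only [hv_def]
    have hAζ : A ζ = 0 := intervalIntegral.integral_same
    have hDζ : D ζ = 0 := intervalIntegral.integral_same
    have hee : Real.exp (-ζ) * Real.exp (2*ζ) = Real.exp ζ := by
      rw [← Real.exp_add]; ring_nf
    rw [hAζ, hDζ]
    linear_combination (-(1/2 : ℝ) * C) * hee
  · have h1mem : (1:ℝ) ∈ Set.Icc ζ 1 := Set.right_mem_Icc.mpr hζle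
    rw [huv 1 h1mem, hd1 1 h1mem]
    simp only [hv_def, hw_def]
    have hD1 : D 1 = C := rfl
    rw [hD1]
    ring
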